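/- (Monotone ordering of influences across structure membership) In the ideal multiple-structure setting, the influence is strictly decreasing in structure membership: if coordinates i and j satisfy (b^{k_s})_i ≥ (b^{k_s})_j for all s ∈ [n₀] with strict inequality for at least one s, then Inf_i^q[f] < Inf_j^q[f]. In particular, a point outlier to all structures has strictly larger influence than a point inlier to at least one structure. -/

import Mathlib

open Finset

/-- Hamming weight of a Boolean vector. -/
def wt {n : ℕ} (b : Fin n → Bool) : ℕ := (Finset.univ.filter fun i => b i = true).card

/-- Bernoulli(q) measure of a single vertex of the cube. -/
noncomputable def mu {n : ℕ} (q : ℝ) (b : Fin n → Bool) : ℝ :=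
  q ^ wt b * (1 - q) ^ (n - wt b)

/-- Flip the `i`-th bit. -/
def bflip {n : ℕ} (i : Fin n) (b : Fin n → Bool) : Fin n → Bool :=
  Function.update b i (!(b i))

/-- Bernoulli(q) weighted influence of coordinate `i` on `f`. -/
noncomputable def Infl {n : ℕ} (q : ℝ) (f : (Fin n → Bool) → Bool) (i : Fin n) : ℝ :=
  ∑ b : Fin n → Bool, if f b ≠ f (bflip i b) then mu q b else 0

/-- The monotone Boolean function of several structures `bs`: feasible (value 0)
iff the subset has at most `p` elements or is contained in one of the structures. -/
def fMulti {n n₀ : ℕ} (p : ℕ) (bs : Fin n₀ → Fin n → Bool) (b : Fin n → Bool) : Bool :=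
  if wt b ≤ p ∨ (∃ s, ∀ i, b i ≤ bs s i) then false else true

section Aux

lemma bool_le_of_eq_true {x y : Bool} (h : x ≤ y) (hx : x = true) : y = true := by
  subst hx
  cases y
  · exact absurd h (by decide)
  · rfl

variable {n n₀ p : ℕ}

lemma wt_mono {b b' : Fin n → Bool} (h : ∀ x, b x ≤ b' x) : wt b ≤ wt b' := by
  apply Finset.card_le_card
  intro x hx
  simp only [Finset.mem_filter, Finset.mem_univ, true_and] at *
  exact bool_le_of_eq_true (h x) hx

lemma wt_comp_equiv (b : Fin n → Bool) (e : Fin n ≃ Fin n) : wt (b ∘ e) = wt b := by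
  unfold wt
  apply Finset.card_bij (fun x _ => e x)
  · intro a ha; simp_all
  · intro a _ b _ hab; exact e.injective hab
  · intro y hy; exact ⟨e.symm y, by simp_all, by simp⟩

lemma fMulti_eq_false_iff (bs : Fin n₀ → Fin n → Bool) (b : Fin n → Bool) :
    fMulti p bs b = false ↔ (wt b ≤ p ∨ ∃ s, ∀ i, b i ≤ bs s i) := by
  unfold fMulti; split <;> simp_all

lemma fMulti_mono (bs : Fin n₀ → Fin n → Bool) {b b' : Fin n → Bool}
    (h : ∀ x, b x ≤ b' x) (hb' : fMulti p bs b' = false) : fMulti p bs b = false := by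
  rw [fMulti_eq_false_iff] at *
  rcases hb' with h1 | ⟨s, hs⟩
  · exact Or.inl (le_trans (wt_mono h) h1)
  · exact Or.inr ⟨s, fun x => le_trans (h x) (hs x)⟩

lemma boundary_iff (bs : Fin n₀ → Fin n → Bool) (i : Fin n) (b : Fin n → Bool) :
    (fMulti p bs b ≠ fMulti p bs (bflip i b)) ↔
      (fMulti p bs (Function.update b i false) = false ∧
       fMulti p bs (Function.update b i true) = true) := by
  have hmono : fMulti p bs (Function.update b i true) = false →
      fMulti p bs (Function.update b i false) = false := by
    intro h
    refine fMulti_mono bs (fun x => ?_) h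
    by_cases hx : x = i
    · rw [hx]; simp
    · simp [Function.update_of_ne hx]
  cases hbi : b i
  · have h1 : Function.update b i false = b := by
      rw [← hbi]; exact Function.update_eq_self i b
    have h2 : bflip i b = Function.update b i true := by
      simp [bflip, hbi]
    rw [h1, h2]
    cases hA : fMulti p bs b <;> cases hB : fMulti p bs (Function.update b i true) <;>
      simp_all
  · have h1 : Function.update b i true = b := by
      rw [← hbi]; exact Function.update_eq_self i b
    have h2 : bflip i b = Function.update b i false := by
      simp [bflip, hbi]
    rw [h1, h2]
    cases hA : fMulti p bs b <;> cases hB : fMulti p bs (Function.update b i false) <;>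
      simp_all

lemma compA (bs : Fin n₀ → Fin n → Bool) (i j : Fin n) (hd : ∀ s, bs s j ≤ bs s i)
    {c : Fin n → Bool} (hci : c i = false) (hc : fMulti p bs c = false) :
    fMulti p bs (c ∘ Equiv.swap i j) = false := by
  rw [fMulti_eq_false_iff] at hc ⊢
  rcases hc with h | ⟨s, hs⟩
  · left; rwa [wt_comp_equiv]
  · right; refine ⟨s, fun x => ?_⟩
    simp only [Function.comp_apply]
    by_cases hxi : x = i
    · rw [hxi, Equiv.swap_apply_left]
      cases hsi : bs s i
      · have hsj : bs s j = false := by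
          have hh := hd s
          cases hbsj : bs s j
          · rfl
          · rw [hbsj, hsi] at hh; exact absurd hh (by decide)
        have hcj : c j = false := by
          have hh := hs j
          cases hcj : c j
          · rfl
          · rw [hcj, hsj] at hh; exact absurd hh (by decide)
        rw [hcj]
      · exact Bool.le_true _
    · by_cases hxj : x = j
      · rw [hxj, Equiv.swap_apply_right, hci]; exact Bool.false_le _
      · rw [Equiv.swap_apply_of_ne_of_ne hxi hxj]; exact hs x

lemma compB (bs : Fin n₀ → Fin n → Bool) (i j : Fin n) (hd : ∀ s, bs s j ≤ bs s i)
    {d : Fin n → Bool} (hdi : d i = true)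
    (h : fMulti p bs (d ∘ Equiv.swap i j) = false) : fMulti p bs d = false := by
  rw [fMulti_eq_false_iff] at h ⊢
  rcases h with h | ⟨s, hs⟩
  · left; rwa [wt_comp_equiv] at h
  · right; refine ⟨s, fun x => ?_⟩
    have hsj : bs s j = true := by
      have hh := hs j
      rw [Function.comp_apply, Equiv.swap_apply_right, hdi] at hh
      exact bool_le_of_eq_true hh rfl
    have hsi : bs s i = true := bool_le_of_eq_true (hd s) hsj
    by_cases hxi : x = i
    · rw [hxi, hsi]; exact Bool.le_true _
    · by_cases hxj : x = j
      · rw [hxj, hsj]; exact Bool.le_true _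
      · have hh := hs x
        rwa [Function.comp_apply, Equiv.swap_apply_of_ne_of_ne hxi hxj] at hh

lemma transfer (bs : Fin n₀ → Fin n → Bool) (i j : Fin n) (hd : ∀ s, bs s j ≤ bs s i)
    (b : Fin n → Bool)
    (h : fMulti p bs b ≠ fMulti p bs (bflip i b)) :
    fMulti p bs (b ∘ Equiv.swap i j) ≠
      fMulti p bs (bflip j (b ∘ Equiv.swap i j)) := by
  rw [boundary_iff] at h ⊢
  obtain ⟨h0, h1⟩ := h
  have key : ∀ v : Bool, Function.update (b ∘ ⇑(Equiv.swap i j)) j v =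
      Function.update b i v ∘ ⇑(Equiv.swap i j) := by
    intro v
    rw [Function.update_comp_equiv, Equiv.symm_swap, Equiv.swap_apply_left]
  constructor
  · rw [key]
    exact compA bs i j hd (by simp) h0
  · rw [key]
    cases hft : fMulti p bs (Function.update b i true ∘ ⇑(Equiv.swap i j))
    · have := compB bs i j hd (d := Function.update b i true) (by simp) hft
      rw [this] at h1; exact absurd h1 (by decide)
    · rfl

end Aux

theorem ideal_multi_influence_strict_order {n n₀ p : ℕ} (k : Fin n₀ → ℕ)
    (hpk : ∀ s, p < k s) (hkn : ∀ s, k s < n)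
    (q : ℝ) (hq : q ∈ Set.Ioo (0:ℝ) 1)
    (bs : Fin n₀ → Fin n → Bool) (hwt : ∀ s, wt (bs s) = k s)
    (hideal : ∀ s t, s ≠ t →
      (Finset.univ.filter fun i' => bs s i' = true ∧ bs t i' = true).card ≤ p)
    (i j : Fin n) (hdom : ∀ s, bs s j ≤ bs s i)
    (hstrict : ∃ s, bs s j = false ∧ bs s i = true) :
    Infl q (fMulti p bs) i < Infl q (fMulti p bs) j := by
  obtain ⟨hq0, hq1⟩ := hq
  obtain ⟨s₀, hjs₀, his₀⟩ := hstrict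
  have hij : i ≠ j := by
    rintro rfl; rw [hjs₀] at his₀; exact absurd his₀ (by decide)
  have hμpos : ∀ b : Fin n → Bool, 0 < mu q b := by
    intro b
    have h1 : (0:ℝ) < 1 - q := by linarith
    unfold mu
    positivity
  have hμcomp : ∀ b : Fin n → Bool, mu q (b ∘ ⇑(Equiv.swap i j)) = mu q b := by
    intro b; unfold mu; rw [wt_comp_equiv]
  -- the swap equivalence on the cube
  set σE : (Fin n → Bool) ≃ (Fin n → Bool) :=
    Equiv.arrowCongr (Equiv.swap i j) (Equiv.refl Bool) with hσE
  have hσ : ∀ b : Fin n → Bool, σE b = b ∘ ⇑(Equiv.swap i j) := by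
    intro b; funext x; simp [hσE, Equiv.arrowCongr]
  -- rewrite Infl j as a sum over σE
  have hrw : Infl q (fMulti p bs) j =
      ∑ b : Fin n → Bool,
        (if fMulti p bs (σE b) ≠ fMulti p bs (bflip j (σE b)) then mu q (σE b) else 0) := by
    unfold Infl
    exact (Equiv.sum_comp σE fun b' =>
      if fMulti p bs b' ≠ fMulti p bs (bflip j b') then mu q b' else 0).symm
  rw [hrw]
  unfold Infl
  -- witness construction
  have hiS : i ∈ Finset.univ.filter (fun x => bs s₀ x = true) := by
    simp [his₀]
  have hScard : (Finset.univ.filter (fun x => bs s₀ x = true)).card = k s₀ := hwt s₀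
  obtain ⟨T, hiT, hTS, hTcard⟩ :=
    Finset.exists_subsuperset_card_eq (n := p + ({i} : Finset (Fin n)).card)
      (Finset.singleton_subset_iff.mpr hiS)
      (by rw [Finset.card_singleton]; omega)
      (by rw [Finset.card_singleton, hScard]; have := hpk s₀; omega)
  rw [Finset.card_singleton] at hTcard
  have hiT' : i ∈ T := hiT (Finset.mem_singleton_self i)
  have hjT : j ∉ T := by
    intro hmem
    have := hTS hmem
    simp only [Finset.mem_filter] at this
    rw [this.2] at hjs₀; exact absurd hjs₀ (by decide)
  set bstar : Fin n → Bool := fun x => decide (x ∈ insert j T) with hbstar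
  have hbi : bstar i = true := by simp [hbstar, hiT']
  have hbj : bstar j = true := by simp [hbstar]
  have hwtb : wt bstar = p + 2 := by
    have hfe : Finset.univ.filter (fun x => bstar x = true) = insert j T := by
      ext x; simp [hbstar]
    rw [wt, hfe, Finset.card_insert_of_notMem hjT, hTcard]
  -- bstar is infeasible
  have hbtrue : fMulti p bs bstar = true := by
    cases hfb : fMulti p bs bstar
    · exfalso
      rw [fMulti_eq_false_iff] at hfb
      rcases hfb with h | ⟨t, ht⟩
      · omega
      · have htj : bs t j = true := bool_le_of_eq_true (ht j) hbj
        rcases eq_or_ne t s₀ with rfl | hts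
        · rw [htj] at hjs₀; exact absurd hjs₀ (by decide)
        · have hsub : T ⊆ Finset.univ.filter
              (fun x => bs s₀ x = true ∧ bs t x = true) := by
            intro x hx
            have h1 := hTS hx
            simp only [Finset.mem_filter, Finset.mem_univ, true_and] at h1 ⊢
            refine ⟨h1, ?_⟩
            have hbx : bstar x = true := by simp [hbstar, hx]
            exact bool_le_of_eq_true (ht x) hbx
          have := Finset.card_le_card hsub
          have := hideal s₀ t (Ne.symm hts)
          omega
    · rfl
  -- update bstar j false is feasible (it is T, contained in bs s₀)
  have hlowj : Function.update bstar j false = fun x => decide (x ∈ T) := by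
    funext x
    by_cases hxj : x = j
    · rw [hxj]; simp [hjT]
    · simp [Function.update_of_ne hxj, hbstar, Finset.mem_insert, hxj]
  have hlowjfalse : fMulti p bs (Function.update bstar j false) = false := by
    rw [fMulti_eq_false_iff, hlowj]
    right; refine ⟨s₀, fun x => ?_⟩
    show decide (x ∈ T) ≤ bs s₀ x
    cases hcx : decide (x ∈ T)
    · exact Bool.false_le _
    · have hxT : x ∈ T := by simpa using hcx
      have := hTS hxT
      simp only [Finset.mem_filter] at this
      rw [this.2]
  -- update bstar i false is infeasible
  have hlowi : fMulti p bs (Function.update bstar i false) = true := by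
    cases hfb : fMulti p bs (Function.update bstar i false)
    · exfalso
      rw [fMulti_eq_false_iff] at hfb
      have hwtlow : wt (Function.update bstar i false) + 1 = wt bstar := by
        have hfe : Finset.univ.filter
            (fun x => Function.update bstar i false x = true) =
            (insert j T).erase i := by
          ext x
          by_cases hxi : x = i
          · rw [hxi]; simp
          · simp [Function.update_of_ne hxi, Finset.mem_erase, hxi, hbstar]
        have hiIn : i ∈ insert j T := Finset.mem_insert_of_mem hiT'
        rw [wt, hfe, Finset.card_erase_of_mem hiIn, hwtb,
          Finset.card_insert_of_notMem hjT, hTcard]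
        omega
      rcases hfb with h | ⟨t, ht⟩
      · omega
      · have hcj : Function.update bstar i false j = true := by
          rw [Function.update_of_ne (Ne.symm hij)]; exact hbj
        have htj : bs t j = true := bool_le_of_eq_true (ht j) hcj
        have hti : bs t i = true := bool_le_of_eq_true (hdom t) htj
        have hble : ∀ x, bstar x ≤ bs t x := by
          intro x
          by_cases hxi : x = i
          · rw [hxi, hti]; exact Bool.le_true _
          · have := ht x
            rwa [Function.update_of_ne hxi] at this
        have : fMulti p bs bstar = false := by
          rw [fMulti_eq_false_iff]; exact Or.inr ⟨t, hble⟩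
        rw [this] at hbtrue; exact absurd hbtrue (by decide)
    · rfl
  -- bstar is fixed by the swap
  have hbswap : σE bstar = bstar := by
    rw [hσ]
    funext x
    by_cases hxi : x = i
    · rw [hxi, Function.comp_apply, Equiv.swap_apply_left, hbj, hbi]
    · by_cases hxj : x = j
      · rw [hxj, Function.comp_apply, Equiv.swap_apply_right, hbi, hbj]
      · rw [Function.comp_apply, Equiv.swap_apply_of_ne_of_ne hxi hxj]
  apply Finset.sum_lt_sum
  · intro b _
    by_cases hb : fMulti p bs b ≠ fMulti p bs (bflip i b)
    · rw [if_pos hb, hσ]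
      rw [if_pos (transfer bs i j hdom b hb), hμcomp]
    · rw [if_neg hb]
      split
      · exact (hμpos _).le
      · exact le_refl _
  · refine ⟨bstar, Finset.mem_univ _, ?_⟩
    have hFi : ¬ (fMulti p bs bstar ≠ fMulti p bs (bflip i bstar)) := by
      have : bflip i bstar = Function.update bstar i false := by
        simp [bflip, hbi]
      rw [this, hlowi, hbtrue]
      simp
    have hFj : fMulti p bs (σE bstar) ≠ fMulti p bs (bflip j (σE bstar)) := by
      rw [hbswap]
      have : bflip j bstar = Function.update bstar j false := by
        simp [bflip, hbj]
      rw [this, hlowjfalse, hbtrue]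
      simp
    rw [if_neg hFi, if_pos hFj, hbswap]
    exact hμpos bstar
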